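/- Fix p ≥ 1 and a scale vector Σ = (σ^1,...,σ^p) with each σ^k > 0. If sum_{i=1}^s d_i * [1 + sum_{k=1}^p exp(-(x_k - μ_i^k)/σ^k)]^{-1} = 0 for all (x_1,...,x_p) ∈ ℝ^p, where μ_1,...,μ_s ∈ ℝ^p are pairwise distinct, then d_i = 0 for all i. -/

import Mathlib

open Polynomial Finset

private lemma key_1d (s : ℕ) (a d : Fin s → ℝ) (ha : ∀ i, 0 < a i)
    (hinj : Function.Injective a)
    (h : ∀ u : ℝ, 0 < u → ∑ i, d i * (1 + a i * u)⁻¹ = 0) : ∀ i, d i = 0 := by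
  classical
  set Q : ℝ[X] := ∑ i, C (d i) * ∏ j ∈ univ.erase i, (1 + C (a j) * X) with hQdef
  have hQeval : ∀ u : ℝ, Q.eval u = ∑ i, d i * ∏ j ∈ univ.erase i, (1 + a j * u) := by
    intro u
    simp [hQdef, Polynomial.eval_finset_sum, Polynomial.eval_prod]
  have hQroot : ∀ u : ℝ, 0 < u → Q.eval u = 0 := by
    intro u hu
    have hpos : ∀ j : Fin s, 0 < 1 + a j * u := fun j => by
      have := mul_pos (ha j) hu; linarith
    rw [hQeval]
    have hterm : ∀ i : Fin s, d i * ∏ j ∈ univ.erase i, (1 + a j * u)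
        = (d i * (1 + a i * u)⁻¹) * ∏ j, (1 + a j * u) := by
      intro i
      rw [← Finset.mul_prod_erase univ _ (mem_univ i)]
      field_simp
      have h1 : (1 + u * a i) ≠ 0 := by have := hpos i; linarith
      rw [mul_assoc, mul_div_assoc, mul_div_cancel_left₀ _ h1]
      congr 1
      exact Finset.prod_congr rfl fun x _ => by ring
    calc (∑ i, d i * ∏ j ∈ univ.erase i, (1 + a j * u))
        = (∑ i, d i * (1 + a i * u)⁻¹) * ∏ j, (1 + a j * u) := by
          rw [Finset.sum_mul]; exact Finset.sum_congr rfl fun i _ => hterm i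
      _ = 0 := by rw [h u hu, zero_mul]
  have hQ0 : Q = 0 := by
    apply Polynomial.eq_zero_of_infinite_isRoot
    exact (Set.Ioi_infinite 0).mono fun u hu => hQroot u hu
  intro i
  have hev := hQeval (-(a i)⁻¹)
  rw [hQ0, Polynomial.eval_zero] at hev
  have hsum : ∑ i', d i' * ∏ j ∈ univ.erase i', (1 + a j * (-(a i)⁻¹))
      = d i * ∏ j ∈ univ.erase i, (1 + a j * (-(a i)⁻¹)) := by
    apply Finset.sum_eq_single
    · intro i' _ hne
      have hmem : i ∈ univ.erase i' := Finset.mem_erase.mpr ⟨fun hc => hne hc.symm, mem_univ i⟩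
      rw [Finset.prod_eq_zero hmem, mul_zero]
      have : a i ≠ 0 := ne_of_gt (ha i)
      field_simp
      norm_num
    · intro hmem; exact absurd (mem_univ i) hmem
  rw [hsum] at hev
  have hprod : ∏ j ∈ univ.erase i, (1 + a j * (-(a i)⁻¹)) ≠ 0 := by
    apply Finset.prod_ne_zero_iff.mpr
    intro j hj
    have hji : j ≠ i := (Finset.mem_erase.mp hj).1
    have hne : a j ≠ a i := fun hc => hji (hinj hc)
    have hai : a i ≠ 0 := ne_of_gt (ha i)
    intro hc
    apply hne
    field_simp at hc
    linarith
  rcases mul_eq_zero.mp hev.symm with h0 | h0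
  · exact h0
  · exact absurd h0 hprod

theorem multivariate_logistic_combination_zero_fixed_scale
    (p s : ℕ) (hp : 1 ≤ p)
    (σ : Fin p → ℝ) (hσ : ∀ k, 0 < σ k)
    (d : Fin s → ℝ) (μ : Fin s → Fin p → ℝ)
    (hμ : Function.Injective μ)
    (h : ∀ x : Fin p → ℝ,
      ∑ i, d i * (1 + ∑ k, Real.exp (-(x k - μ i k) / σ k))⁻¹ = 0) :
    ∀ i, d i = 0 := by
  classical
  -- coefficients
  set c : Fin s → Fin p → ℝ := fun i k => Real.exp (μ i k / σ k) with hc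
  have hcpos : ∀ i k, 0 < c i k := fun i k => Real.exp_pos _
  -- for distinct i j, some coordinate differs
  have hcne : ∀ i j : Fin s, i ≠ j → ∃ k, c i k ≠ c j k := by
    intro i j hij
    by_contra hcon
    push_neg at hcon
    apply hij
    apply hμ
    funext k
    have := hcon k
    have h2 : μ i k / σ k = μ j k / σ k := Real.exp_injective this
    have hσk := (hσ k).ne'
    field_simp at h2
    exact h2
  -- the polynomials whose roots we must avoid
  set P : Fin s → Fin s → ℝ[X] := fun i j => ∑ k, C (c i k - c j k) * X ^ (k : ℕ) with hP
  have hPcoeff : ∀ i j (k0 : Fin p), (P i j).coeff k0 = c i k0 - c j k0 := by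
    intro i j k0
    rw [hP]
    rw [Polynomial.finset_sum_coeff]
    simp only [Polynomial.coeff_C_mul, Polynomial.coeff_X_pow, mul_ite, mul_one, mul_zero]
    rw [Finset.sum_eq_single k0]
    · simp
    · intro k _ hk
      have h1 : (k0:ℕ) ≠ (k:ℕ) := fun hh => hk (Fin.val_injective hh).symm
      have h2 : (k:ℕ) ≠ (k0:ℕ) := fun hh => hk (Fin.val_injective hh)
      simp [h1, h2]
    · intro hmem; exact absurd (mem_univ k0) hmem
  have hPne : ∀ i j : Fin s, i ≠ j → P i j ≠ 0 := by
    intro i j hij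
    obtain ⟨k, hk⟩ := hcne i j hij
    intro hzero
    have := hPcoeff i j k
    rw [hzero] at this
    simp at this
    exact hk (by linarith)
  -- bad set is finite
  have hbad : (⋃ (q : Fin s × Fin s) (_ : q.1 ≠ q.2), {y : ℝ | (P q.1 q.2).IsRoot y}).Finite := by
    apply Set.Finite.biUnion (Set.finite_univ.subset (Set.subset_univ _))
    intro q hq
    exact Polynomial.finite_setOf_isRoot (hPne q.1 q.2 hq)
  obtain ⟨y, hy⟩ := ((Set.Ioi_infinite (0:ℝ)).diff hbad).nonempty
  obtain ⟨hy0, hynb⟩ := hy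
  have hy0 : (0:ℝ) < y := hy0
  -- define a
  set a : Fin s → ℝ := fun i => ∑ k, c i k * y ^ (k : ℕ) with ha
  have hapos : ∀ i, 0 < a i := by
    intro i
    apply Finset.sum_pos
    · intro k _; exact mul_pos (hcpos i k) (pow_pos hy0 _)
    · have : Nonempty (Fin p) := Fin.pos_iff_nonempty.mp hp
      exact Finset.univ_nonempty
  have hainj : Function.Injective a := by
    intro i j hij
    by_contra hne
    apply hynb
    refine Set.mem_iUnion.mpr ⟨(i, j), Set.mem_iUnion.mpr ⟨hne, ?_⟩⟩
    show (P i j).eval y = 0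
    rw [hP]
    simp only [Polynomial.eval_finset_sum, Polynomial.eval_mul, Polynomial.eval_C,
      Polynomial.eval_pow, Polynomial.eval_X]
    have : ∑ k, (c i k - c j k) * y ^ (k:ℕ) = a i - a j := by
      rw [ha]; rw [← Finset.sum_sub_distrib]
      exact Finset.sum_congr rfl fun k _ => by ring
    rw [this, hij, sub_self]
  -- reduce to 1d
  apply key_1d s a d hapos hainj
  intro u hu
  set w : ℝ := -Real.log y with hw
  have hey : Real.exp (-w) = y := by rw [hw, neg_neg, Real.exp_log hy0]
  have heq := h (fun k => σ k * (-Real.log u + w * k))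
  have hterm : ∀ (i : Fin s) (k : Fin p),
      Real.exp (-(σ k * (-Real.log u + w * k) - μ i k) / σ k) = c i k * y ^ (k:ℕ) * u := by
    intro i k
    have hσk : σ k ≠ 0 := (hσ k).ne'
    have harg : -(σ k * (-Real.log u + w * k) - μ i k) / σ k
        = Real.log u + (-w) * k + μ i k / σ k := by
      field_simp
      ring
    rw [harg, Real.exp_add, Real.exp_add]
    rw [Real.exp_log hu]
    have : Real.exp ((-w) * (k:ℕ)) = y ^ (k:ℕ) := by
      rw [mul_comm, Real.exp_nat_mul, hey]
    rw [this]
    rw [hc]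
    ring
  have : ∀ i : Fin s, (1 + ∑ k, Real.exp (-((fun k => σ k * (-Real.log u + w * k)) k - μ i k) / σ k))
      = 1 + a i * u := by
    intro i
    congr 1
    rw [ha]
    rw [Finset.sum_mul]
    exact Finset.sum_congr rfl fun k _ => by rw [hterm i k]
  rw [Finset.sum_congr rfl (fun i _ => by rw [this i])] at heq
  exact heq
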